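/- Assume (Φ1), assume F(x,t) ≤ c₂|t|^{q(x)} for all x ∈ Ω and t ∈ ℝ with a constant c₂ > 0, and assume there is c > 0 such that ‖u‖_{q(·)} ≤ c·‖u‖ for all u ∈ X. Then there exist ρ ∈ (0,1), α > 0 and λ_* > 0 such that for every λ ∈ (0, λ_*) and every u ∈ X with ‖u‖ = ρ, one has J_λ(u) ≥ α > 0. -/

import Mathlib

open MeasureTheory Set Filter
open scoped ENNReal

noncomputable section

abbrev Eucl (N : ℕ) := EuclideanSpace ℝ (Fin N)

variable {N : ℕ}

/-- `Q = ℝ^{2N} \ (CΩ)^2`. -/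
def Qset (Ω : Set (Eucl N)) : Set (Eucl N × Eucl N) := (Ωᶜ ×ˢ Ωᶜ)ᶜ

/-- `φ_{x,y}(t) = a(x,y,|t|) t` for `t ≠ 0`, `φ_{x,y}(0) = 0`. -/
def phiF (a : Eucl N → Eucl N → ℝ → ℝ) (x y : Eucl N) (t : ℝ) : ℝ :=
  if t = 0 then 0 else a x y |t| * t

/-- `Φ_{x,y}(t) = ∫₀ᵗ φ_{x,y}(τ) dτ`. -/
def PhiF (a : Eucl N → Eucl N → ℝ → ℝ) (x y : Eucl N) (t : ℝ) : ℝ :=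
  ∫ τ in (0:ℝ)..t, phiF a x y τ

/-- Gagliardo-type modular on `Q` at scale `lam`. -/
def modQ (a : Eucl N → Eucl N → ℝ → ℝ) (s : ℝ) (Ω : Set (Eucl N))
    (u : Eucl N → ℝ) (lam : ℝ) : ℝ≥0∞ :=
  ∫⁻ p in Qset Ω, ENNReal.ofReal
    (PhiF a p.1 p.2 (|u p.1 - u p.2| / (lam * dist p.1 p.2 ^ s)) / dist p.1 p.2 ^ (N : ℝ))

/-- Gagliardo-type modular on `Ω × Ω` at scale `lam`. -/
def modOO (a : Eucl N → Eucl N → ℝ → ℝ) (s : ℝ) (Ω : Set (Eucl N))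
    (u : Eucl N → ℝ) (lam : ℝ) : ℝ≥0∞ :=
  ∫⁻ p in Ω ×ˢ Ω, ENNReal.ofReal
    (PhiF a p.1 p.2 (|u p.1 - u p.2| / (lam * dist p.1 p.2 ^ s)) / dist p.1 p.2 ^ (N : ℝ))

/-- modular `∫_Ω Φ̂_x(|u|/λ)`. -/
def modO (a : Eucl N → Eucl N → ℝ → ℝ) (Ω : Set (Eucl N))
    (u : Eucl N → ℝ) (lam : ℝ) : ℝ≥0∞ :=
  ∫⁻ x in Ω, ENNReal.ofReal (PhiF a x x (|u x| / lam))

/-- modular `∫_{CΩ} β Φ̂_x(|u|/λ)`. -/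
def modB (a : Eucl N → Eucl N → ℝ → ℝ) (Ω : Set (Eucl N)) (β : Eucl N → ℝ)
    (u : Eucl N → ℝ) (lam : ℝ) : ℝ≥0∞ :=
  ∫⁻ x in Ωᶜ, ENNReal.ofReal (β x * PhiF a x x (|u x| / lam))

/-- Luxemburg infimum of a modular family (`∞` if no admissible `λ`). -/
def lux (m : ℝ → ℝ≥0∞) : ℝ≥0∞ :=
  sInf {l : ℝ≥0∞ | ∃ lam : ℝ, 0 < lam ∧ l = ENNReal.ofReal lam ∧ m lam ≤ 1}

/-- `‖u‖_X = [u]_{s,Φ,Q} + ‖u‖_{Φ̂} + ‖u‖_{Φ̂,β,CΩ}`. -/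
def normX (a : Eucl N → Eucl N → ℝ → ℝ) (s : ℝ) (Ω : Set (Eucl N)) (β : Eucl N → ℝ)
    (u : Eucl N → ℝ) : ℝ≥0∞ :=
  lux (modQ a s Ω u) + lux (modO a Ω u) + lux (modB a Ω β u)

/-- the modular `ρ_s`. -/
def rhoS (a : Eucl N → Eucl N → ℝ → ℝ) (s : ℝ) (Ω : Set (Eucl N)) (β : Eucl N → ℝ)
    (u : Eucl N → ℝ) : ℝ≥0∞ :=
  modQ a s Ω u 1 + modO a Ω u 1 + modB a Ω β u 1

/-- the modular norm `‖u‖ = inf {λ > 0 : ρ_s(u/λ) ≤ 1}`. -/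
def normM (a : Eucl N → Eucl N → ℝ → ℝ) (s : ℝ) (Ω : Set (Eucl N)) (β : Eucl N → ℝ)
    (u : Eucl N → ℝ) : ℝ≥0∞ :=
  sInf {l : ℝ≥0∞ | ∃ lam : ℝ, 0 < lam ∧ l = ENNReal.ofReal lam ∧
    rhoS a s Ω β (fun x => u x / lam) ≤ 1}

/-- `X` described via the norm `‖·‖_X`. -/
def XsetX (a : Eucl N → Eucl N → ℝ → ℝ) (s : ℝ) (Ω : Set (Eucl N)) (β : Eucl N → ℝ) :
    Set (Eucl N → ℝ) :=
  {u | Measurable u ∧ normX a s Ω β u < ⊤}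

/-- `X` described via the modular norm `‖·‖`. -/
def XsetM (a : Eucl N → Eucl N → ℝ → ℝ) (s : ℝ) (Ω : Set (Eucl N)) (β : Eucl N → ℝ) :
    Set (Eucl N → ℝ) :=
  {u | Measurable u ∧ (∃ lam : ℝ, 0 < lam ∧ rhoS a s Ω β (fun x => u x / lam) < ⊤) ∧
    normM a s Ω β u < ⊤}

/-- the fractional difference quotient `D^s u`. -/
def Du (s : ℝ) (u : Eucl N → ℝ) (p : Eucl N × Eucl N) : ℝ :=
  (u p.1 - u p.2) / dist p.1 p.2 ^ s

/-- `a(x,y,|D^s u|) D^s u`, with the convention that it vanishes when `u x = u y`. -/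
def Ku (a : Eucl N → Eucl N → ℝ → ℝ) (s : ℝ) (u : Eucl N → ℝ) (p : Eucl N × Eucl N) : ℝ :=
  if u p.1 = u p.2 then 0 else a p.1 p.2 |Du s u p| * Du s u p

/-- the form `A_s(u,v)`. -/
def Aform (a : Eucl N → Eucl N → ℝ → ℝ) (s : ℝ) (Ω : Set (Eucl N)) (β : Eucl N → ℝ)
    (u v : Eucl N → ℝ) : ℝ :=
  (1/2) * (∫ p in Qset Ω, Ku a s u p * Du s v p / dist p.1 p.2 ^ (N : ℝ))
  + (∫ x in Ω, a x x |u x| * u x * v x)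
  + ∫ x in Ωᶜ, β x * (a x x |u x| * u x * v x)

/-- the nonlocal normal derivative `𝒩^s_a u` on `CΩ`. -/
def Nop (a : Eucl N → Eucl N → ℝ → ℝ) (s : ℝ) (Ω : Set (Eucl N)) (u : Eucl N → ℝ)
    (x : Eucl N) : ℝ :=
  ∫ y in Ω, Ku a s u (x, y) / dist x y ^ ((N : ℝ) + s)

/-- `F(x,t) = ∫₀ᵗ f(x,τ) dτ`. -/
def Ff (f : Eucl N → ℝ → ℝ) (x : Eucl N) (t : ℝ) : ℝ := ∫ τ in (0:ℝ)..t, f x τ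

/-- the energy functional `J_λ`. -/
def Jlam (a : Eucl N → Eucl N → ℝ → ℝ) (s : ℝ) (Ω : Set (Eucl N)) (β : Eucl N → ℝ)
    (f : Eucl N → ℝ → ℝ) (lam : ℝ) (u : Eucl N → ℝ) : ℝ :=
  (1/2) * (modQ a s Ω u 1).toReal + (modO a Ω u 1).toReal + (modB a Ω β u 1).toReal
    - lam * ∫ x in Ω, Ff f x (u x)

/-- the variable-exponent Luxemburg norm `‖u‖_{q(·)}` on `Ω`. -/
def normq (Ω : Set (Eucl N)) (q : Eucl N → ℝ) (u : Eucl N → ℝ) : ℝ≥0∞ :=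
  sInf {l : ℝ≥0∞ | ∃ lam : ℝ, 0 < lam ∧ l = ENNReal.ofReal lam ∧
    (∫⁻ x in Ω, ENNReal.ofReal (|u x / lam| ^ q x)) ≤ 1}

/-! ### Auxiliary lemmas -/

lemma phiF_nonneg {a : Eucl N → Eucl N → ℝ → ℝ} (hmono : ∀ x y, StrictMono (phiF a x y))
    (x y : Eucl N) {t : ℝ} (ht : 0 ≤ t) : 0 ≤ phiF a x y t := by
  have h0 : phiF a x y 0 = 0 := by simp [phiF]
  have := (hmono x y).monotone ht
  rwa [h0] at this

lemma PhiF_nonneg {a : Eucl N → Eucl N → ℝ → ℝ} (hmono : ∀ x y, StrictMono (phiF a x y))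
    (x y : Eucl N) {t : ℝ} (ht : 0 ≤ t) : 0 ≤ PhiF a x y t :=
  intervalIntegral.integral_nonneg ht (fun τ hτ => phiF_nonneg hmono x y hτ.1)

lemma PhiF_ratio {a : Eucl N → Eucl N → ℝ → ℝ} {φm φp : ℝ}
    (hmono : ∀ x y, StrictMono (phiF a x y)) (hφm : 1 < φm)
    (hΦ1 : ∀ x y t, 0 < t →
      φm ≤ t * phiF a x y t / PhiF a x y t ∧ t * phiF a x y t / PhiF a x y t ≤ φp)
    (x y : Eucl N) {t : ℝ} (ht : 0 < t) :
    t * phiF a x y t ≤ φp * PhiF a x y t ∧ φm * PhiF a x y t ≤ t * phiF a x y t := by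
  have hΦpos : 0 < PhiF a x y t := by
    rcases (PhiF_nonneg hmono x y ht.le).lt_or_eq with h | h
    · exact h
    · exfalso
      have h1 := (hΦ1 x y t ht).1
      rw [← h, div_zero] at h1
      linarith
  obtain ⟨h1, h2⟩ := hΦ1 x y t ht
  exact ⟨(div_le_iff₀ hΦpos).mp h2, (le_div_iff₀ hΦpos).mp h1⟩

lemma hasDerivAt_PhiF {a : Eucl N → Eucl N → ℝ → ℝ}
    (hcont : ∀ x y, Continuous (phiF a x y)) (x y : Eucl N) (t : ℝ) :
    HasDerivAt (PhiF a x y) (phiF a x y t) t :=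
  intervalIntegral.integral_hasDerivAt_right ((hcont x y).intervalIntegrable 0 t)
    ((hcont x y).stronglyMeasurableAtFilter volume (nhds t)) (hcont x y).continuousAt

lemma PhiF_scale_up {a : Eucl N → Eucl N → ℝ → ℝ} {φm φp : ℝ}
    (hmono : ∀ x y, StrictMono (phiF a x y)) (hcont : ∀ x y, Continuous (phiF a x y))
    (hφm : 1 < φm)
    (hΦ1 : ∀ x y t, 0 < t →
      φm ≤ t * phiF a x y t / PhiF a x y t ∧ t * phiF a x y t / PhiF a x y t ≤ φp)
    (x y : Eucl N) {t r : ℝ} (ht : 0 ≤ t) (hr0 : 0 < r) (hr1 : r ≤ 1) :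
    r ^ φp * PhiF a x y t ≤ PhiF a x y (r * t) := by
  rcases ht.lt_or_eq with ht | ht
  swap
  · rw [← ht, mul_zero]
    have h0 : PhiF a x y 0 = 0 := by simp [PhiF]
    simp [h0]
  set g : ℝ → ℝ := fun ρ => PhiF a x y (ρ * t) / ρ ^ φp with hg
  have hder : ∀ ρ : ℝ, 0 < ρ →
      HasDerivAt g ((phiF a x y (ρ * t) * t * ρ ^ φp
        - PhiF a x y (ρ * t) * (φp * ρ ^ (φp - 1))) / (ρ ^ φp) ^ 2) ρ := by
    intro ρ hρ
    have h1 : HasDerivAt (fun ρ : ℝ => PhiF a x y (ρ * t)) (phiF a x y (ρ * t) * t) ρ := by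
      have := (hasDerivAt_PhiF hcont x y (ρ * t)).comp ρ (hasDerivAt_mul_const t)
      exact this
    have h2 : HasDerivAt (fun ρ : ℝ => ρ ^ φp) (φp * ρ ^ (φp - 1)) ρ :=
      Real.hasDerivAt_rpow_const (Or.inl hρ.ne')
    exact h1.div h2 (Real.rpow_pos_of_pos hρ φp).ne'
  have hanti : AntitoneOn g (Set.Ioc (0:ℝ) 1) := by
    apply antitoneOn_of_deriv_nonpos (convex_Ioc 0 1)
    · exact fun ρ hρ => ((hder ρ hρ.1).differentiableAt.continuousAt).continuousWithinAt
    · intro ρ hρ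
      rw [interior_Ioc] at hρ
      exact (hder ρ hρ.1).differentiableAt.differentiableWithinAt
    · intro ρ hρ
      rw [interior_Ioc] at hρ
      rw [(hder ρ hρ.1).deriv]
      apply div_nonpos_of_nonpos_of_nonneg _ (sq_nonneg _)
      have hρt : 0 < ρ * t := mul_pos hρ.1 ht
      have hb := (PhiF_ratio hmono hφm hΦ1 x y hρt).1
      have hP : 0 < ρ ^ φp := Real.rpow_pos_of_pos hρ.1 φp
      have hrp : ρ ^ (φp - 1) = ρ ^ φp / ρ := Real.rpow_sub_one hρ.1.ne' φp
      have hiden : PhiF a x y (ρ * t) * (φp * (ρ ^ φp / ρ))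
          = PhiF a x y (ρ * t) * (φp * ρ ^ φp) / ρ := by ring
      rw [hrp, sub_nonpos, hiden, le_div_iff₀ hρ.1]
      nlinarith [mul_le_mul_of_nonneg_right hb hP.le]
  have h := hanti ⟨hr0, hr1⟩ ⟨zero_lt_one, le_refl 1⟩ hr1
  rw [hg] at h
  simp only [one_mul, Real.one_rpow, div_one] at h
  have hP : 0 < r ^ φp := Real.rpow_pos_of_pos hr0 φp
  calc r ^ φp * PhiF a x y t ≤ r ^ φp * (PhiF a x y (r * t) / r ^ φp) :=
        mul_le_mul_of_nonneg_left h hP.le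
    _ = PhiF a x y (r * t) := by field_simp

lemma PhiF_scale_down {a : Eucl N → Eucl N → ℝ → ℝ} {φm φp : ℝ}
    (hmono : ∀ x y, StrictMono (phiF a x y)) (hcont : ∀ x y, Continuous (phiF a x y))
    (hφm : 1 < φm)
    (hΦ1 : ∀ x y t, 0 < t →
      φm ≤ t * phiF a x y t / PhiF a x y t ∧ t * phiF a x y t / PhiF a x y t ≤ φp)
    (x y : Eucl N) {t r : ℝ} (ht : 0 ≤ t) (hr0 : 0 < r) (hr1 : r ≤ 1) :
    PhiF a x y (r * t) ≤ r ^ φm * PhiF a x y t := by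
  rcases ht.lt_or_eq with ht | ht
  swap
  · rw [← ht, mul_zero]
    have h0 : PhiF a x y 0 = 0 := by simp [PhiF]
    simp [h0]
  set g : ℝ → ℝ := fun ρ => PhiF a x y (ρ * t) / ρ ^ φm with hg
  have hder : ∀ ρ : ℝ, 0 < ρ →
      HasDerivAt g ((phiF a x y (ρ * t) * t * ρ ^ φm
        - PhiF a x y (ρ * t) * (φm * ρ ^ (φm - 1))) / (ρ ^ φm) ^ 2) ρ := by
    intro ρ hρ
    have h1 : HasDerivAt (fun ρ : ℝ => PhiF a x y (ρ * t)) (phiF a x y (ρ * t) * t) ρ := by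
      have := (hasDerivAt_PhiF hcont x y (ρ * t)).comp ρ (hasDerivAt_mul_const t)
      exact this
    have h2 : HasDerivAt (fun ρ : ℝ => ρ ^ φm) (φm * ρ ^ (φm - 1)) ρ :=
      Real.hasDerivAt_rpow_const (Or.inl hρ.ne')
    exact h1.div h2 (Real.rpow_pos_of_pos hρ φm).ne'
  have hmon : MonotoneOn g (Set.Ioc (0:ℝ) 1) := by
    apply monotoneOn_of_deriv_nonneg (convex_Ioc 0 1)
    · exact fun ρ hρ => ((hder ρ hρ.1).differentiableAt.continuousAt).continuousWithinAt
    · intro ρ hρ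
      rw [interior_Ioc] at hρ
      exact (hder ρ hρ.1).differentiableAt.differentiableWithinAt
    · intro ρ hρ
      rw [interior_Ioc] at hρ
      rw [(hder ρ hρ.1).deriv]
      apply div_nonneg _ (sq_nonneg _)
      have hρt : 0 < ρ * t := mul_pos hρ.1 ht
      have hb := (PhiF_ratio hmono hφm hΦ1 x y hρt).2
      have hP : 0 < ρ ^ φm := Real.rpow_pos_of_pos hρ.1 φm
      have hrp : ρ ^ (φm - 1) = ρ ^ φm / ρ := Real.rpow_sub_one hρ.1.ne' φm
      have hiden : PhiF a x y (ρ * t) * (φm * (ρ ^ φm / ρ))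
          = PhiF a x y (ρ * t) * (φm * ρ ^ φm) / ρ := by ring
      rw [hrp, sub_nonneg, hiden, div_le_iff₀ hρ.1]
      nlinarith [mul_le_mul_of_nonneg_right hb hP.le]
  have h := hmon ⟨hr0, hr1⟩ ⟨zero_lt_one, le_refl 1⟩ hr1
  rw [hg] at h
  simp only [one_mul, Real.one_rpow, div_one] at h
  have hP : 0 < r ^ φm := Real.rpow_pos_of_pos hr0 φm
  calc PhiF a x y (r * t) = r ^ φm * (PhiF a x y (r * t) / r ^ φm) := by field_simp
    _ ≤ r ^ φm * PhiF a x y t := mul_le_mul_of_nonneg_left h hP.le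

lemma rhoS_scale_up {a : Eucl N → Eucl N → ℝ → ℝ} {φm φp : ℝ} (s : ℝ) (Ω : Set (Eucl N))
    {β : Eucl N → ℝ} (hβ0 : ∀ᵐ x ∂(volume.restrict Ωᶜ), 0 ≤ β x)
    (hmono : ∀ x y, StrictMono (phiF a x y)) (hcont : ∀ x y, Continuous (phiF a x y))
    (hφm : 1 < φm)
    (hΦ1 : ∀ x y t, 0 < t →
      φm ≤ t * phiF a x y t / PhiF a x y t ∧ t * phiF a x y t / PhiF a x y t ≤ φp)
    (u : Eucl N → ℝ) {r : ℝ} (hr0 : 0 < r) (hr1 : r ≤ 1) :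
    ENNReal.ofReal (r ^ φp) * rhoS a s Ω β (fun x => u x / r) ≤ rhoS a s Ω β u := by
  have hrp : (0:ℝ) ≤ r ^ φp := (Real.rpow_pos_of_pos hr0 φp).le
  have key : ∀ (x y : Eucl N) (A D D2 w : ℝ), 0 ≤ A → 0 ≤ D → 0 ≤ D2 → 0 ≤ w →
      ENNReal.ofReal (r ^ φp) * ENNReal.ofReal (w * PhiF a x y (A / r / D) / D2)
        ≤ ENNReal.ofReal (w * PhiF a x y (A / D) / D2) := by
    intro x y A D D2 w hA hD hD2 hw
    have ht : 0 ≤ A / r / D := div_nonneg (div_nonneg hA hr0.le) hD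
    have hsc := PhiF_scale_up hmono hcont hφm hΦ1 x y ht hr0 hr1
    have hAD : A / D = r * (A / r / D) := by
      rw [div_div, eq_comm, ← mul_div_assoc, mul_div_mul_left _ _ hr0.ne']
    rw [hAD, ← ENNReal.ofReal_mul hrp]
    apply ENNReal.ofReal_le_ofReal
    have h1 : r ^ φp * (w * PhiF a x y (A / r / D)) ≤ w * PhiF a x y (r * (A / r / D)) := by
      nlinarith [mul_le_mul_of_nonneg_left hsc hw]
    calc r ^ φp * (w * PhiF a x y (A / r / D) / D2)
        = r ^ φp * (w * PhiF a x y (A / r / D)) / D2 := by ring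
      _ ≤ w * PhiF a x y (r * (A / r / D)) / D2 := by
          rw [div_eq_mul_inv, div_eq_mul_inv]
          exact mul_le_mul_of_nonneg_right h1 (inv_nonneg.mpr hD2)
  have hQ : ENNReal.ofReal (r ^ φp) * modQ a s Ω (fun x => u x / r) 1 ≤ modQ a s Ω u 1 := by
    rw [modQ, modQ, ← lintegral_const_mul' _ _ ENNReal.ofReal_ne_top]
    apply lintegral_mono
    intro p
    have habs : |u p.1 / r - u p.2 / r| = |u p.1 - u p.2| / r := by
      rw [div_sub_div_same, abs_div, abs_of_pos hr0]
    have h := key p.1 p.2 |u p.1 - u p.2| (1 * dist p.1 p.2 ^ s) (dist p.1 p.2 ^ (N : ℝ)) 1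
      (abs_nonneg _) (by positivity) (by positivity) zero_le_one
    simp only [habs]
    simpa using h
  have hO : ENNReal.ofReal (r ^ φp) * modO a Ω (fun x => u x / r) 1 ≤ modO a Ω u 1 := by
    rw [modO, modO, ← lintegral_const_mul' _ _ ENNReal.ofReal_ne_top]
    apply lintegral_mono
    intro x
    have habs : |u x / r| = |u x| / r := by rw [abs_div, abs_of_pos hr0]
    have h := key x x |u x| 1 1 1 (abs_nonneg _) zero_le_one zero_le_one zero_le_one
    simp only [habs]
    simpa using h
  have hB : ENNReal.ofReal (r ^ φp) * modB a Ω β (fun x => u x / r) 1 ≤ modB a Ω β u 1 := by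
    rw [modB, modB, ← lintegral_const_mul' _ _ ENNReal.ofReal_ne_top]
    apply lintegral_mono_ae
    filter_upwards [hβ0] with x hβx
    have habs : |u x / r| = |u x| / r := by rw [abs_div, abs_of_pos hr0]
    have h := key x x |u x| 1 1 (β x) (abs_nonneg _) zero_le_one zero_le_one hβx
    simp only [habs]
    simpa using h
  calc ENNReal.ofReal (r ^ φp) * rhoS a s Ω β (fun x => u x / r)
      = ENNReal.ofReal (r ^ φp) * modQ a s Ω (fun x => u x / r) 1
        + ENNReal.ofReal (r ^ φp) * modO a Ω (fun x => u x / r) 1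
        + ENNReal.ofReal (r ^ φp) * modB a Ω β (fun x => u x / r) 1 := by
        rw [rhoS]; ring
    _ ≤ modQ a s Ω u 1 + modO a Ω u 1 + modB a Ω β u 1 :=
        add_le_add (add_le_add hQ hO) hB
    _ = rhoS a s Ω β u := rfl

lemma rhoS_scale_down {a : Eucl N → Eucl N → ℝ → ℝ} {φm φp : ℝ} (s : ℝ) (Ω : Set (Eucl N))
    {β : Eucl N → ℝ} (hβ0 : ∀ᵐ x ∂(volume.restrict Ωᶜ), 0 ≤ β x)
    (hmono : ∀ x y, StrictMono (phiF a x y)) (hcont : ∀ x y, Continuous (phiF a x y))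
    (hφm : 1 < φm)
    (hΦ1 : ∀ x y t, 0 < t →
      φm ≤ t * phiF a x y t / PhiF a x y t ∧ t * phiF a x y t / PhiF a x y t ≤ φp)
    (u : Eucl N → ℝ) {r : ℝ} (hr0 : 0 < r) (hr1 : r ≤ 1) :
    rhoS a s Ω β u ≤ ENNReal.ofReal (r ^ φm) * rhoS a s Ω β (fun x => u x / r) := by
  have hrp : (0:ℝ) ≤ r ^ φm := (Real.rpow_pos_of_pos hr0 φm).le
  have key : ∀ (x y : Eucl N) (A D D2 w : ℝ), 0 ≤ A → 0 ≤ D → 0 ≤ D2 → 0 ≤ w →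
      ENNReal.ofReal (w * PhiF a x y (A / D) / D2)
        ≤ ENNReal.ofReal (r ^ φm) * ENNReal.ofReal (w * PhiF a x y (A / r / D) / D2) := by
    intro x y A D D2 w hA hD hD2 hw
    have ht : 0 ≤ A / r / D := div_nonneg (div_nonneg hA hr0.le) hD
    have hsc := PhiF_scale_down hmono hcont hφm hΦ1 x y ht hr0 hr1
    have hAD : A / D = r * (A / r / D) := by
      rw [div_div, eq_comm, ← mul_div_assoc, mul_div_mul_left _ _ hr0.ne']
    rw [hAD, ← ENNReal.ofReal_mul hrp]
    apply ENNReal.ofReal_le_ofReal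
    have h1 : w * PhiF a x y (r * (A / r / D)) ≤ r ^ φm * (w * PhiF a x y (A / r / D)) := by
      nlinarith [mul_le_mul_of_nonneg_left hsc hw]
    calc w * PhiF a x y (r * (A / r / D)) / D2
        ≤ r ^ φm * (w * PhiF a x y (A / r / D)) / D2 := by
          rw [div_eq_mul_inv, div_eq_mul_inv]
          exact mul_le_mul_of_nonneg_right h1 (inv_nonneg.mpr hD2)
      _ = r ^ φm * (w * PhiF a x y (A / r / D) / D2) := by ring
  have hQ : modQ a s Ω u 1 ≤ ENNReal.ofReal (r ^ φm) * modQ a s Ω (fun x => u x / r) 1 := by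
    rw [modQ, modQ, ← lintegral_const_mul' _ _ ENNReal.ofReal_ne_top]
    apply lintegral_mono
    intro p
    have habs : |u p.1 / r - u p.2 / r| = |u p.1 - u p.2| / r := by
      rw [div_sub_div_same, abs_div, abs_of_pos hr0]
    have h := key p.1 p.2 |u p.1 - u p.2| (1 * dist p.1 p.2 ^ s) (dist p.1 p.2 ^ (N : ℝ)) 1
      (abs_nonneg _) (by positivity) (by positivity) zero_le_one
    simp only [habs]
    simpa using h
  have hO : modO a Ω u 1 ≤ ENNReal.ofReal (r ^ φm) * modO a Ω (fun x => u x / r) 1 := by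
    rw [modO, modO, ← lintegral_const_mul' _ _ ENNReal.ofReal_ne_top]
    apply lintegral_mono
    intro x
    have habs : |u x / r| = |u x| / r := by rw [abs_div, abs_of_pos hr0]
    have h := key x x |u x| 1 1 1 (abs_nonneg _) zero_le_one zero_le_one zero_le_one
    simp only [habs]
    simpa using h
  have hB : modB a Ω β u 1 ≤ ENNReal.ofReal (r ^ φm) * modB a Ω β (fun x => u x / r) 1 := by
    rw [modB, modB, ← lintegral_const_mul' _ _ ENNReal.ofReal_ne_top]
    apply lintegral_mono_ae
    filter_upwards [hβ0] with x hβx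
    have habs : |u x / r| = |u x| / r := by rw [abs_div, abs_of_pos hr0]
    have h := key x x |u x| 1 1 (β x) (abs_nonneg _) zero_le_one zero_le_one hβx
    simp only [habs]
    simpa using h
  calc rhoS a s Ω β u
      ≤ ENNReal.ofReal (r ^ φm) * modQ a s Ω (fun x => u x / r) 1
        + ENNReal.ofReal (r ^ φm) * modO a Ω (fun x => u x / r) 1
        + ENNReal.ofReal (r ^ φm) * modB a Ω β (fun x => u x / r) 1 :=
        add_le_add (add_le_add hQ hO) hB
    _ = ENNReal.ofReal (r ^ φm) * rhoS a s Ω β (fun x => u x / r) := by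
        rw [rhoS]; ring


/-- mountain-pass geometry — `J_λ ≥ α > 0` on a small sphere `‖u‖ = ρ`
for all small `λ`. -/
theorem statement11
    (N : ℕ) (hN : 1 ≤ N)
    (Ω : Set (Eucl N)) (hΩo : IsOpen Ω) (hΩb : Bornology.IsBounded Ω) (hΩne : Ω.Nonempty)
    (s : ℝ) (hs : s ∈ Set.Ioo (0:ℝ) 1)
    (a : Eucl N → Eucl N → ℝ → ℝ)
    (ha : Measurable fun p : Eucl N × Eucl N × ℝ => a p.1 p.2.1 p.2.2)
    (hmono : ∀ x y, StrictMono (phiF a x y))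
    (hcont : ∀ x y, Continuous (phiF a x y))
    (hsurj : ∀ x y, Function.Surjective (phiF a x y))
    (β : Eucl N → ℝ) (hβm : Measurable β)
    (hβb : ∃ C : ℝ, ∀ᵐ x ∂(volume.restrict Ωᶜ), |β x| ≤ C)
    (hβ0 : ∀ᵐ x ∂(volume.restrict Ωᶜ), 0 ≤ β x)
    (φm φp : ℝ) (hφm : 1 < φm) (hφmp : φm ≤ φp)
    (hΦ1 : ∀ x y t, 0 < t →
      φm ≤ t * phiF a x y t / PhiF a x y t ∧ t * phiF a x y t / PhiF a x y t ≤ φp)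
    (q : Eucl N → ℝ) (hqc : ContinuousOn q (closure Ω)) (hq1 : ∀ x ∈ closure Ω, 1 < q x)
    (qp : ℝ) (hqp_le : ∀ x ∈ closure Ω, q x ≤ qp)
    (f : Eucl N → ℝ → ℝ)
    (hfmeas : ∀ t : ℝ, Measurable fun x => f x t)
    (hfcont : ∀ x : Eucl N, Continuous fun t => f x t)
    (c₂ : ℝ) (hc₂ : 0 < c₂)
    (hF : ∀ x ∈ Ω, ∀ t : ℝ, Ff f x t ≤ c₂ * |t| ^ q x)
    (c : ℝ) (hc : 0 < c)
    (hemb : ∀ u ∈ XsetM a s Ω β, normq Ω q u ≤ ENNReal.ofReal c * normM a s Ω β u) :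
    ∃ ρ α lamstar : ℝ, ρ ∈ Set.Ioo (0:ℝ) 1 ∧ 0 < α ∧ 0 < lamstar ∧
      ∀ lam ∈ Set.Ioo (0:ℝ) lamstar, ∀ u ∈ XsetM a s Ω β,
        normM a s Ω β u = ENNReal.ofReal ρ → α ≤ Jlam a s Ω β f lam u := by
    classical
  set ρ : ℝ := min (1/2) (1/(2*c)) with hρdef
  have hρ0 : 0 < ρ := lt_min (by norm_num) (by positivity)
  have hρ1 : ρ < 1 := lt_of_le_of_lt (min_le_left _ _) (by norm_num)
  have hcρ0 : 0 < c * ρ := mul_pos hc hρ0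
  have hcρ1 : 2 * (c * ρ) ≤ 1 := by
    have h1 : ρ ≤ 1/(2*c) := min_le_right _ _
    have h2 : c * ρ ≤ c * (1/(2*c)) := mul_le_mul_of_nonneg_left h1 hc.le
    have h3 : c * (1/(2*c)) = 1/2 := by field_simp
    linarith
  set P : ℝ := (ρ/2) ^ φp with hPdef
  have hP0 : 0 < P := Real.rpow_pos_of_pos (by positivity) _
  set M : ℝ := c₂ * (2 * (c * ρ)) with hMdef
  have hM0 : 0 < M := by positivity
  refine ⟨ρ, P/4, P/(4*M), ⟨hρ0, hρ1⟩, by positivity, by positivity, ?_⟩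
  intro lam hlam u hu hnorm
  obtain ⟨hum, hfl, hnormfin⟩ := hu
  -- any admissible scale is at least ρ
  have hS_lb : ∀ μ : ℝ, 0 < μ → rhoS a s Ω β (fun x => u x / μ) ≤ 1 → ρ ≤ μ := by
    intro μ hμ hle
    have hmem : normM a s Ω β u ≤ ENNReal.ofReal μ := sInf_le ⟨μ, hμ, rfl, hle⟩
    rw [hnorm] at hmem
    exact (ENNReal.ofReal_le_ofReal_iff hμ.le).mp hmem
  -- Step A : lower bound for the modular
  have hbig : (1:ℝ≥0∞) ≤ rhoS a s Ω β (fun x => u x / (ρ/2)) := by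
    by_contra h
    push_neg at h
    have := hS_lb (ρ/2) (by positivity) h.le
    linarith
  have hlow : ENNReal.ofReal P ≤ rhoS a s Ω β u := by
    have h1 := rhoS_scale_up (φm := φm) (φp := φp) s Ω hβ0 hmono hcont hφm hΦ1 u
      (r := ρ/2) (by positivity) (by linarith)
    calc ENNReal.ofReal P = ENNReal.ofReal ((ρ/2) ^ φp) * 1 := by rw [mul_one]
      _ ≤ ENNReal.ofReal ((ρ/2) ^ φp) * rhoS a s Ω β (fun x => u x / (ρ/2)) :=
          mul_le_mul_right hbig _
      _ ≤ rhoS a s Ω β u := h1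
  -- Step B : finiteness of the modular
  have hfin : rhoS a s Ω β u ≠ ⊤ := by
    have hρ' : ρ < (1+ρ)/2 := by linarith
    have hlt : normM a s Ω β u < ENNReal.ofReal ((1+ρ)/2) := by
      rw [hnorm]
      exact (ENNReal.ofReal_lt_ofReal_iff (by linarith)).mpr hρ'
    obtain ⟨l, hlmem, hllt⟩ := sInf_lt_iff.mp hlt
    obtain ⟨μ, hμ0, rfl, hμle⟩ := hlmem
    have hμlt : μ < (1+ρ)/2 := (ENNReal.ofReal_lt_ofReal_iff_of_nonneg hμ0.le).mp hllt
    have hμ1 : μ ≤ 1 := by linarith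
    have h2 := rhoS_scale_down (φm := φm) (φp := φp) s Ω hβ0 hmono hcont hφm hΦ1 u hμ0 hμ1
    have h3 : rhoS a s Ω β u ≤ ENNReal.ofReal (μ ^ φm) := by
      calc rhoS a s Ω β u
          ≤ ENNReal.ofReal (μ ^ φm) * rhoS a s Ω β (fun x => u x / μ) := h2
        _ ≤ ENNReal.ofReal (μ ^ φm) * 1 := mul_le_mul_right hμle _
        _ = ENNReal.ofReal (μ ^ φm) := mul_one _
    exact ne_top_of_le_ne_top ENNReal.ofReal_ne_top h3
  -- Step C : bound for the source term
  have hq_lb : ∫ x in Ω, Ff f x (u x) ≤ M := by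
    have hnq : normq Ω q u < ENNReal.ofReal (2*(c*ρ)) := by
      have h1 := hemb u ⟨hum, hfl, hnormfin⟩
      rw [hnorm, ← ENNReal.ofReal_mul hc.le] at h1
      exact lt_of_le_of_lt h1 ((ENNReal.ofReal_lt_ofReal_iff (by positivity)).mpr (by linarith))
    obtain ⟨l, hlmem, hllt⟩ := sInf_lt_iff.mp hnq
    obtain ⟨μ, hμ0, rfl, hμint⟩ := hlmem
    have hμlt : μ < 2*(c*ρ) := (ENNReal.ofReal_lt_ofReal_iff_of_nonneg hμ0.le).mp hllt
    have hμ1 : μ ≤ 1 := by linarith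
    -- the q-modular of u is at most μ
    have hlint : (∫⁻ x in Ω, ENNReal.ofReal (|u x| ^ q x)) ≤ ENNReal.ofReal μ := by
      have hpt : ∀ᵐ x ∂(volume.restrict Ω),
          ENNReal.ofReal (|u x| ^ q x)
            ≤ ENNReal.ofReal μ * ENNReal.ofReal (|u x / μ| ^ q x) := by
        filter_upwards [ae_restrict_mem hΩo.measurableSet] with x hx
        rw [← ENNReal.ofReal_mul hμ0.le]
        apply ENNReal.ofReal_le_ofReal
        have hqx : 1 ≤ q x := (hq1 x (subset_closure hx)).le
        have habs : |u x / μ| = |u x| / μ := by rw [abs_div, abs_of_pos hμ0]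
        have h1 : |u x| = μ * (|u x| / μ) := by field_simp
        calc |u x| ^ q x = (μ * (|u x| / μ)) ^ q x := by rw [← h1]
          _ = μ ^ q x * (|u x| / μ) ^ q x := Real.mul_rpow hμ0.le (by positivity)
          _ ≤ μ * (|u x| / μ) ^ q x := by
              have : μ ^ q x ≤ μ := by
                calc μ ^ q x ≤ μ ^ (1:ℝ) :=
                      Real.rpow_le_rpow_of_exponent_ge hμ0 hμ1 hqx
                  _ = μ := Real.rpow_one μ
              exact mul_le_mul_of_nonneg_right this (by positivity)
          _ = μ * |u x / μ| ^ q x := by rw [habs]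
      calc (∫⁻ x in Ω, ENNReal.ofReal (|u x| ^ q x))
          ≤ ∫⁻ x in Ω, ENNReal.ofReal μ * ENNReal.ofReal (|u x / μ| ^ q x) :=
            lintegral_mono_ae hpt
        _ = ENNReal.ofReal μ * ∫⁻ x in Ω, ENNReal.ofReal (|u x / μ| ^ q x) :=
            lintegral_const_mul' _ _ ENNReal.ofReal_ne_top
        _ ≤ ENNReal.ofReal μ * 1 := mul_le_mul_right hμint _
        _ = ENNReal.ofReal μ := mul_one _
    have hlintF : (∫⁻ x in Ω, ENNReal.ofReal (Ff f x (u x)))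
        ≤ ENNReal.ofReal c₂ * ENNReal.ofReal μ := by
      have hpt2 : ∀ᵐ x ∂(volume.restrict Ω),
          ENNReal.ofReal (Ff f x (u x))
            ≤ ENNReal.ofReal c₂ * ENNReal.ofReal (|u x| ^ q x) := by
        filter_upwards [ae_restrict_mem hΩo.measurableSet] with x hx
        rw [← ENNReal.ofReal_mul hc₂.le]
        exact ENNReal.ofReal_le_ofReal (hF x hx (u x))
      calc (∫⁻ x in Ω, ENNReal.ofReal (Ff f x (u x)))
          ≤ ∫⁻ x in Ω, ENNReal.ofReal c₂ * ENNReal.ofReal (|u x| ^ q x) :=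
            lintegral_mono_ae hpt2
        _ = ENNReal.ofReal c₂ * ∫⁻ x in Ω, ENNReal.ofReal (|u x| ^ q x) :=
            lintegral_const_mul' _ _ ENNReal.ofReal_ne_top
        _ ≤ ENNReal.ofReal c₂ * ENNReal.ofReal μ := mul_le_mul_right hlint _
    by_cases hint : Integrable (fun x => Ff f x (u x)) (volume.restrict Ω)
    · have hpos := hint.pos_part
      have h1 : ∫ x in Ω, Ff f x (u x) ≤ ∫ x in Ω, max (Ff f x (u x)) 0 :=
        integral_mono hint hpos (fun x => le_max_left _ _)
      have h2 : ∫ x in Ω, max (Ff f x (u x)) 0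
          = (∫⁻ x in Ω, ENNReal.ofReal (max (Ff f x (u x)) 0)).toReal :=
        integral_eq_lintegral_of_nonneg_ae
          (Filter.Eventually.of_forall (fun x => le_max_right _ _))
          hpos.aestronglyMeasurable
      have h3 : (∫⁻ x in Ω, ENNReal.ofReal (max (Ff f x (u x)) 0))
          = ∫⁻ x in Ω, ENNReal.ofReal (Ff f x (u x)) := by
        apply lintegral_congr
        intro x
        rcases le_total (Ff f x (u x)) 0 with h | h
        · rw [max_eq_right h, ENNReal.ofReal_zero, ENNReal.ofReal_eq_zero.mpr h]
        · rw [max_eq_left h]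
      have h4 : (∫⁻ x in Ω, ENNReal.ofReal (Ff f x (u x))).toReal ≤ c₂ * μ := by
        have := ENNReal.toReal_mono
          (ENNReal.mul_ne_top ENNReal.ofReal_ne_top ENNReal.ofReal_ne_top) hlintF
        rwa [← ENNReal.ofReal_mul hc₂.le, ENNReal.toReal_ofReal (by positivity)] at this
      have h5 : c₂ * μ ≤ M := by
        rw [hMdef]
        nlinarith
      rw [h2, h3] at h1
      linarith
    · rw [integral_undef hint]
      exact hM0.le
  -- Step D : conclusion
  have hQfin : modQ a s Ω u 1 ≠ ⊤ := by
    refine ne_top_of_le_ne_top hfin ?_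
    calc modQ a s Ω u 1 ≤ modQ a s Ω u 1 + modO a Ω u 1 := self_le_add_right _ _
      _ ≤ modQ a s Ω u 1 + modO a Ω u 1 + modB a Ω β u 1 := self_le_add_right _ _
      _ = rhoS a s Ω β u := rfl
  have hOfin : modO a Ω u 1 ≠ ⊤ := by
    refine ne_top_of_le_ne_top hfin ?_
    calc modO a Ω u 1 ≤ modQ a s Ω u 1 + modO a Ω u 1 := self_le_add_left _ _
      _ ≤ modQ a s Ω u 1 + modO a Ω u 1 + modB a Ω β u 1 := self_le_add_right _ _
      _ = rhoS a s Ω β u := rfl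
  have hBfin : modB a Ω β u 1 ≠ ⊤ := by
    refine ne_top_of_le_ne_top hfin ?_
    calc modB a Ω β u 1 ≤ modQ a s Ω u 1 + modO a Ω u 1 + modB a Ω β u 1 :=
          self_le_add_left _ _
      _ = rhoS a s Ω β u := rfl
  have hsum : (rhoS a s Ω β u).toReal
      = (modQ a s Ω u 1).toReal + (modO a Ω u 1).toReal + (modB a Ω β u 1).toReal := by
    rw [rhoS, ENNReal.toReal_add (ENNReal.add_ne_top.mpr ⟨hQfin, hOfin⟩) hBfin,
      ENNReal.toReal_add hQfin hOfin]
  have hPle : P ≤ (rhoS a s Ω β u).toReal := by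
    have := ENNReal.toReal_mono hfin hlow
    rwa [ENNReal.toReal_ofReal hP0.le] at this
  rw [hsum] at hPle
  have hmQ : 0 ≤ (modQ a s Ω u 1).toReal := ENNReal.toReal_nonneg
  have hmO : 0 ≤ (modO a Ω u 1).toReal := ENNReal.toReal_nonneg
  have hmB : 0 ≤ (modB a Ω β u 1).toReal := ENNReal.toReal_nonneg
  have hFterm : lam * ∫ x in Ω, Ff f x (u x) ≤ P/4 := by
    calc lam * ∫ x in Ω, Ff f x (u x) ≤ lam * M :=
          mul_le_mul_of_nonneg_left hq_lb hlam.1.le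
      _ ≤ (P/(4*M)) * M := mul_le_mul_of_nonneg_right hlam.2.le hM0.le
      _ = P/4 := by field_simp
  rw [Jlam]
  linarith
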